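/- Let Q be a symmetric n×n real matrix, f ∈ ℝⁿ. The function P^d(σ) = -(1/2)(f+σ)ᵀ[Q_d(σ)]⁻¹(f+σ) is concave on the open convex set S⁺ = {σ ∈ ℝⁿ : σ > 0 componentwise and Q_d(σ) = Q + 2Diag(σ) is positive definite}. -/

import Mathlib

open Matrix

lemma key_ineq {n : ℕ} {A : Matrix (Fin n) (Fin n) ℝ} (hA : A.PosDef)
    (x z : Fin n → ℝ) :
    2 * (z ⬝ᵥ x) - z ⬝ᵥ A *ᵥ z ≤ x ⬝ᵥ A⁻¹ *ᵥ x := by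
  have hAinv : A * A⁻¹ = 1 := mul_nonsing_inv A (isUnit_iff_isUnit_det _ |>.1 hA.isUnit)
  have hAt : Aᵀ = A := by
    have := hA.isHermitian
    rwa [Matrix.IsHermitian, conjTranspose_eq_transpose_of_trivial] at this
  set v : Fin n → ℝ := A⁻¹ *ᵥ x with hv
  have hAv : A *ᵥ v = x := by
    rw [hv, mulVec_mulVec, hAinv, one_mulVec]
  have h0 : 0 ≤ (v - z) ⬝ᵥ A *ᵥ (v - z) := by
    simpa using hA.posSemidef.dotProduct_mulVec_nonneg (v - z)
  have hsym : ∀ u w : Fin n → ℝ, u ⬝ᵥ A *ᵥ w = (A *ᵥ u) ⬝ᵥ w := by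
    intro u w
    rw [dotProduct_mulVec, ← vecMul_transpose, hAt]
  have hexp : (v - z) ⬝ᵥ A *ᵥ (v - z)
      = x ⬝ᵥ A⁻¹ *ᵥ x - 2 * (z ⬝ᵥ x) + z ⬝ᵥ A *ᵥ z := by
    rw [mulVec_sub, dotProduct_sub, sub_dotProduct, sub_dotProduct]
    rw [hsym v z, hAv]
    have h1 : v ⬝ᵥ x = x ⬝ᵥ A⁻¹ *ᵥ x := by rw [hv, dotProduct_comm]
    have h2 : z ⬝ᵥ x = x ⬝ᵥ z := dotProduct_comm _ _
    rw [h1, h2]; ring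
  linarith [hexp ▸ h0]

lemma posDef_combo {n : ℕ} {A B : Matrix (Fin n) (Fin n) ℝ}
    (hA : A.PosDef) (hB : B.PosDef) {a b : ℝ}
    (ha : 0 ≤ a) (hb : 0 ≤ b) (hab : a + b = 1) :
    (a • A + b • B).PosDef := by
  refine Matrix.PosDef.of_dotProduct_mulVec_pos ?_ ?_
  · show (a • A + b • B)ᴴ = a • A + b • B
    rw [conjTranspose_add, conjTranspose_smul, conjTranspose_smul,
      star_trivial, star_trivial, hA.1, hB.1]
  · intro x hx
    have h1 := hA.dotProduct_mulVec_pos hx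
    have h2 := hB.dotProduct_mulVec_pos hx
    rw [add_mulVec, dotProduct_add, smul_mulVec, smul_mulVec,
      dotProduct_smul, dotProduct_smul, smul_eq_mul, smul_eq_mul]
    rcases ha.lt_or_eq with ha' | ha'
    · exact add_pos_of_pos_of_nonneg (mul_pos ha' h1) (mul_nonneg hb h2.le)
    · have hb1 : b = 1 := by linarith
      rw [← ha', hb1]; simpa using h2

theorem Pd_concave_on_Splus
    (n : ℕ) (Q : Matrix (Fin n) (Fin n) ℝ) (hQ : Q.IsSymm) (f : Fin n → ℝ)
    (Pd : (Fin n → ℝ) → ℝ)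
    (hPd : ∀ σ, Pd σ =
      -(1 / 2 : ℝ) * ((f + σ) ⬝ᵥ (Q + 2 • Matrix.diagonal σ)⁻¹.mulVec (f + σ))) :
    ConcaveOn ℝ
      {σ : Fin n → ℝ | (∀ i, 0 < σ i) ∧ (Q + 2 • Matrix.diagonal σ).PosDef} Pd := by
  have hMeq : ∀ (σ τ : Fin n → ℝ) (a b : ℝ), a + b = 1 →
      Q + 2 • Matrix.diagonal (a • σ + b • τ)
        = a • (Q + 2 • Matrix.diagonal σ) + b • (Q + 2 • Matrix.diagonal τ) := by
    intro σ τ a b hab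
    have hb1 : b = 1 - a := by linarith
    subst hb1
    ext i j
    by_cases h : i = j <;>
      simp [Matrix.diagonal, h, Matrix.add_apply, Matrix.smul_apply, smul_eq_mul] <;> ring
  constructor
  · -- convexity of the set
    intro σ hσ τ hτ a b ha hb hab
    refine ⟨fun i => ?_, ?_⟩
    · simp only [Pi.add_apply, Pi.smul_apply, smul_eq_mul]
      nlinarith [mul_le_mul_of_nonneg_left (min_le_left (σ i) (τ i)) ha,
        mul_le_mul_of_nonneg_left (min_le_right (σ i) (τ i)) hb,
        lt_min (hσ.1 i) (hτ.1 i)]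
    · rw [hMeq σ τ a b hab]
      exact posDef_combo hσ.2 hτ.2 ha hb hab
  · -- concavity inequality
    intro σ hσ τ hτ a b ha hb hab
    set A := Q + 2 • Matrix.diagonal σ with hA
    set B := Q + 2 • Matrix.diagonal τ with hB
    set M := a • A + b • B with hMdef
    have hM : M.PosDef := posDef_combo hσ.2 hτ.2 ha hb hab
    have hMinv : M * M⁻¹ = 1 := mul_nonsing_inv M (isUnit_iff_isUnit_det _ |>.1 hM.isUnit)
    set x := f + σ with hx
    set y := f + τ with hy
    set u := f + (a • σ + b • τ) with hudef
    have hu : u = a • x + b • y := by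
      have hb1 : b = 1 - a := by linarith
      subst hb1
      ext i
      simp only [hudef, hx, hy, Pi.add_apply, Pi.smul_apply, smul_eq_mul]
      ring
    set z := M⁻¹ *ᵥ u with hz
    have hMz : M *ᵥ z = u := by rw [hz, mulVec_mulVec, hMinv, one_mulVec]
    have key1 := key_ineq hσ.2 x z
    have key2 := key_ineq hτ.2 y z
    have hzu : z ⬝ᵥ u = a * (z ⬝ᵥ x) + b * (z ⬝ᵥ y) := by
      rw [hu, dotProduct_add, dotProduct_smul, dotProduct_smul, smul_eq_mul, smul_eq_mul]
    have hzMz : z ⬝ᵥ M *ᵥ z = a * (z ⬝ᵥ A *ᵥ z) + b * (z ⬝ᵥ B *ᵥ z) := by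
      rw [hMdef, add_mulVec, dotProduct_add, smul_mulVec, smul_mulVec,
        dotProduct_smul, dotProduct_smul, smul_eq_mul, smul_eq_mul]
    have hform : u ⬝ᵥ M⁻¹ *ᵥ u = 2 * (z ⬝ᵥ u) - z ⬝ᵥ M *ᵥ z := by
      rw [hMz]
      have : u ⬝ᵥ M⁻¹ *ᵥ u = z ⬝ᵥ u := by rw [hz, dotProduct_comm]
      rw [this]; ring
    have hmain : u ⬝ᵥ M⁻¹ *ᵥ u ≤ a * (x ⬝ᵥ A⁻¹ *ᵥ x) + b * (y ⬝ᵥ B⁻¹ *ᵥ y) := by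
      have h1 : a * (2 * (z ⬝ᵥ x) - z ⬝ᵥ A *ᵥ z) ≤ a * (x ⬝ᵥ A⁻¹ *ᵥ x) :=
        mul_le_mul_of_nonneg_left key1 ha
      have h2 : b * (2 * (z ⬝ᵥ y) - z ⬝ᵥ B *ᵥ z) ≤ b * (y ⬝ᵥ B⁻¹ *ᵥ y) :=
        mul_le_mul_of_nonneg_left key2 hb
      rw [hform, hzu, hzMz]
      nlinarith [h1, h2]
    have hPdc : Pd (a • σ + b • τ) = -(1/2 : ℝ) * (u ⬝ᵥ M⁻¹ *ᵥ u) := by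
      rw [hPd, ← hudef, hMeq σ τ a b hab, ← hA, ← hB, ← hMdef]
    rw [hPdc, hPd σ, hPd τ, ← hx, ← hy, ← hA, ← hB]
    simp only [smul_eq_mul]
    nlinarith [hmain]
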